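/- arXiv:1809.11063 — 2 statements merged into one kernel-verified Lean document; each statement's English description precedes it below -/
import Mathlib

section
/- Let Λ be a countable discrete abelian group with unimodular 2-cocycle c, and w : Λ → [0,∞) satisfying the difference bound |w(λ+μ) − w(λ)| ≤ C·w(μ) for all λ,μ. Then for a ∈ ℓ¹(Λ) with w·a ∈ ℓ¹(Λ) and b ∈ ℓ²(Λ), the commutator of multiplication by w with twisted convolution by a is bounded: ‖w·(a*_c b) − a*_c(w·b)‖_{ℓ²} ≤ C‖w·a‖_{ℓ¹}‖b‖_{ℓ²}. -/
open scoped ENNReal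
set_option maxHeartbeats 1000000


/-- The `c`-twisted convolution on functions on `Λ`. -/
noncomputable def twistedConv {Λ : Type*} [AddCommGroup Λ] (c : Λ → Λ → ℂ)
    (a b : Λ → ℂ) (lam : Λ) : ℂ :=
  ∑' mu : Λ, a mu * b (lam - mu) * c mu (lam - mu)

/-- If `w` satisfies the difference bound `|w(λ+μ) - w(λ)| ≤ C w(μ)`, then the
commutator of multiplication by `w` with twisted convolution by `a` is bounded on `ℓ²`:
`‖w · (a *_c b) - a *_c (w · b)‖_{ℓ²} ≤ C ‖w · a‖_{ℓ¹} ‖b‖_{ℓ²}`. -/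
theorem twistedConv_commutator_bound {Λ : Type*} [AddCommGroup Λ] [Countable Λ]
    (c : Λ → Λ → ℂ) (hc : ∀ lam mu, ‖c lam mu‖ = 1)
    (w : Λ → ℝ) (hw : ∀ lam, 0 ≤ w lam)
    (C : ℝ) (hC : 0 ≤ C)
    (hdif : ∀ lam mu, |w (lam + mu) - w lam| ≤ C * w mu)
    (a b : Λ → ℂ)
    (ha1 : Summable fun mu => ‖a mu‖)
    (haw : Summable fun mu => w mu * ‖a mu‖)
    (hb2 : Summable fun lam => ‖b lam‖ ^ 2) :
    (Summable fun lam =>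
      ‖(w lam : ℂ) * twistedConv c a b lam -
        twistedConv c a (fun t => (w t : ℂ) * b t) lam‖ ^ 2) ∧
    Real.sqrt (∑' lam,
        ‖(w lam : ℂ) * twistedConv c a b lam -
          twistedConv c a (fun t => (w t : ℂ) * b t) lam‖ ^ 2) ≤
      C * (∑' mu, w mu * ‖a mu‖) * Real.sqrt (∑' lam, ‖b lam‖ ^ 2) := by
  classical
  haveI : Fact ((1:ℝ≥0∞) ≤ 2) := ⟨by norm_num⟩
  set M := Real.sqrt (∑' lam, ‖b lam‖ ^ 2) with hMdef
  have hM0 : 0 ≤ M := Real.sqrt_nonneg _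
  have htb0 : 0 ≤ ∑' lam, ‖b lam‖ ^ 2 := tsum_nonneg fun _ => sq_nonneg _
  have hM2 : M ^ 2 = ∑' lam, ‖b lam‖ ^ 2 := Real.sq_sqrt htb0
  have hbM : ∀ lam, ‖b lam‖ ≤ M := by
    intro lam
    have h1 : ‖b lam‖ ^ 2 ≤ ∑' l, ‖b l‖ ^ 2 :=
      Summable.le_tsum hb2 lam fun _ _ => sq_nonneg _
    have := Real.sqrt_le_sqrt h1
    rwa [Real.sqrt_sq (norm_nonneg _)] at this
  -- difference bound in subtraction form
  have hd : ∀ lam mu, |w lam - w (lam - mu)| ≤ C * w mu := by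
    intro lam mu
    have := hdif (lam - mu) mu
    rwa [sub_add_cancel] at this
  have hwle : ∀ lam mu, w (lam - mu) ≤ w lam + C * w mu := by
    intro lam mu
    have h := hd lam mu
    have := abs_le.1 h
    linarith [this.2, neg_le_of_abs_le h]
  -- translated square-summability of b
  have hb2' : ∀ mu : Λ, Summable fun lam => ‖b (lam - mu)‖ ^ 2 := fun mu =>
    ((Equiv.subRight mu).summable_iff).2 hb2
  -- the commutator kernel
  set F : Λ → Λ → ℂ := fun mu lam =>
    a mu * (((w lam - w (lam - mu) : ℝ) : ℂ) * b (lam - mu)) * c mu (lam - mu) with hFdef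
  have hFnorm : ∀ mu lam, ‖F mu lam‖ ≤ C * w mu * ‖a mu‖ * ‖b (lam - mu)‖ := by
    intro mu lam
    have : ‖F mu lam‖ = ‖a mu‖ * (|w lam - w (lam - mu)| * ‖b (lam - mu)‖) := by
      simp only [hFdef, norm_mul, hc, mul_one, Complex.norm_real, Real.norm_eq_abs]
    rw [this]
    have h1 : |w lam - w (lam - mu)| * ‖b (lam - mu)‖ ≤ (C * w mu) * ‖b (lam - mu)‖ :=
      mul_le_mul_of_nonneg_right (hd lam mu) (norm_nonneg _)
    calc ‖a mu‖ * (|w lam - w (lam - mu)| * ‖b (lam - mu)‖)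
        ≤ ‖a mu‖ * ((C * w mu) * ‖b (lam - mu)‖) :=
          mul_le_mul_of_nonneg_left h1 (norm_nonneg _)
      _ = C * w mu * ‖a mu‖ * ‖b (lam - mu)‖ := by ring
  -- each F mu is in ℓ²
  have hFmem : ∀ mu : Λ, Memℓp (F mu) 2 := by
    intro mu
    apply memℓp_gen
    have h2 : ((2:ℝ≥0∞).toReal) = (2:ℝ) := by norm_num
    rw [h2]
    have : Summable fun lam => (C * w mu * ‖a mu‖ * ‖b (lam - mu)‖) ^ 2 := by
      have := (hb2' mu).mul_left ((C * w mu * ‖a mu‖) ^ 2)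
      apply this.congr
      intro lam
      ring
    apply Summable.of_nonneg_of_le (fun _ => Real.rpow_nonneg (norm_nonneg _) _) (fun lam => ?_) this
    · calc ‖F mu lam‖ ^ (2:ℝ) = ‖F mu lam‖ ^ (2:ℕ) := by
            rw [← Real.rpow_natCast]; norm_num
        _ ≤ (C * w mu * ‖a mu‖ * ‖b (lam - mu)‖) ^ 2 := by
            apply pow_le_pow_left₀ (norm_nonneg _) (hFnorm mu lam)
  set g : Λ → lp (fun _ : Λ => ℂ) 2 := fun mu => ⟨F mu, hFmem mu⟩ with hgdef
  have hp2 : (0:ℝ) < (2:ℝ≥0∞).toReal := by norm_num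
  -- norm bound on g mu
  have hgnorm : ∀ mu, ‖g mu‖ ≤ C * w mu * ‖a mu‖ * M := by
    intro mu
    have hK0 : 0 ≤ C * w mu * ‖a mu‖ := mul_nonneg (mul_nonneg hC (hw mu)) (norm_nonneg _)
    have hsq : ‖g mu‖ ^ (2:ℝ≥0∞).toReal ≤ (C * w mu * ‖a mu‖ * M) ^ 2 := by
      rw [lp.norm_rpow_eq_tsum hp2]
      have h2 : ((2:ℝ≥0∞).toReal) = (2:ℝ) := by norm_num
      have hterm : ∀ lam, ‖(g mu : Λ → ℂ) lam‖ ^ (2:ℝ≥0∞).toReal ≤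
          (C * w mu * ‖a mu‖) ^ 2 * ‖b (lam - mu)‖ ^ 2 := by
        intro lam
        rw [h2]
        have : ‖(g mu : Λ → ℂ) lam‖ ^ (2:ℝ) = ‖F mu lam‖ ^ (2:ℕ) := by
          rw [← Real.rpow_natCast]; norm_num; rfl
        rw [this, ← mul_pow]
        exact pow_le_pow_left₀ (norm_nonneg _) (hFnorm mu lam) 2
      have hsum : Summable fun lam => (C * w mu * ‖a mu‖) ^ 2 * ‖b (lam - mu)‖ ^ 2 :=
        (hb2' mu).mul_left _
      calc ∑' lam, ‖(g mu : Λ → ℂ) lam‖ ^ (2:ℝ≥0∞).toReal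
          ≤ ∑' lam, (C * w mu * ‖a mu‖) ^ 2 * ‖b (lam - mu)‖ ^ 2 := by
            apply Summable.tsum_le_tsum hterm _ hsum
            apply ((lp.memℓp (g mu)).summable hp2)
        _ = (C * w mu * ‖a mu‖) ^ 2 * ∑' lam, ‖b (lam - mu)‖ ^ 2 := tsum_mul_left
        _ = (C * w mu * ‖a mu‖) ^ 2 * ∑' lam, ‖b lam‖ ^ 2 := by
            congr 1
            exact (Equiv.subRight mu).tsum_eq fun lam => ‖b lam‖ ^ 2
        _ = (C * w mu * ‖a mu‖ * M) ^ 2 := by rw [← hM2]; ring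
    have h2 : ((2:ℝ≥0∞).toReal) = (2:ℝ) := by norm_num
    rw [h2] at hsq
    have hsq' : ‖g mu‖ ^ (2:ℕ) ≤ (C * w mu * ‖a mu‖ * M) ^ (2:ℕ) := by
      calc ‖g mu‖ ^ (2:ℕ) = ‖g mu‖ ^ (2:ℝ) := by rw [← Real.rpow_natCast]; norm_num
        _ ≤ _ := hsq
    exact (pow_le_pow_iff_left₀ (norm_nonneg _) (mul_nonneg hK0 hM0) two_ne_zero).1 hsq'
  -- summability of norms
  have hKsum : Summable fun mu => C * w mu * ‖a mu‖ * M := by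
    have := (haw.mul_left C).mul_right M
    apply this.congr
    intro mu
    ring
  have hgnormsum : Summable fun mu => ‖g mu‖ :=
    Summable.of_nonneg_of_le (fun _ => norm_nonneg _) hgnorm hKsum
  have hgsum : Summable g := Summable.of_norm hgnormsum
  set S : lp (fun _ : Λ => ℂ) 2 := ∑' mu, g mu with hSdef
  -- evaluation maps
  have hSapp : ∀ lam, (S : Λ → ℂ) lam = ∑' mu, F mu lam := by
    intro lam
    let ev : lp (fun _ : Λ => ℂ) 2 →ₗ[ℂ] ℂ :=
      { toFun := fun f => (f : Λ → ℂ) lam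
        map_add' := fun f h => rfl
        map_smul' := fun r f => rfl }
    let evC : lp (fun _ : Λ => ℂ) 2 →L[ℂ] ℂ :=
      LinearMap.mkContinuous ev 1 (fun f => by
        exact le_of_le_of_eq (lp.norm_apply_le_norm (by norm_num) f lam) (one_mul _).symm)
    have := evC.map_tsum hgsum
    exact this
  -- the pointwise identity
  have hcomm : ∀ lam,
      (w lam : ℂ) * twistedConv c a b lam -
        twistedConv c a (fun t => (w t : ℂ) * b t) lam = (S : Λ → ℂ) lam := by
    intro lam
    rw [hSapp lam]
    have h1 : Summable fun mu => (w lam : ℂ) * (a mu * b (lam - mu) * c mu (lam - mu)) := by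
      apply Summable.of_norm
      apply Summable.of_nonneg_of_le (fun _ => norm_nonneg _) (fun mu => ?_)
        ((ha1.mul_right M).mul_left (w lam))
      · simp only [norm_mul, hc, mul_one, Complex.norm_real, Real.norm_eq_abs,
          abs_of_nonneg (hw lam)]
        have : ‖b (lam - mu)‖ ≤ M := hbM _
        calc w lam * (‖a mu‖ * ‖b (lam - mu)‖) ≤ w lam * (‖a mu‖ * M) := by
              apply mul_le_mul_of_nonneg_left _ (hw lam)
              exact mul_le_mul_of_nonneg_left this (norm_nonneg _)
          _ = w lam * (‖a mu‖ * M) := rfl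
    have h2 : Summable fun mu =>
        a mu * ((w (lam - mu) : ℂ) * b (lam - mu)) * c mu (lam - mu) := by
      apply Summable.of_norm
      apply Summable.of_nonneg_of_le (fun _ => norm_nonneg _) (fun mu => ?_)
        ((ha1.mul_left (w lam * M)).add (haw.mul_left (C * M)))
      · simp only [norm_mul, hc, mul_one, Complex.norm_real, Real.norm_eq_abs,
          abs_of_nonneg (hw _)]
        have hb' : ‖b (lam - mu)‖ ≤ M := hbM _
        have hw' : w (lam - mu) ≤ w lam + C * w mu := hwle lam mu
        have h0 : ‖a mu‖ * (w (lam - mu) * ‖b (lam - mu)‖) ≤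
            ‖a mu‖ * ((w lam + C * w mu) * M) := by
          apply mul_le_mul_of_nonneg_left _ (norm_nonneg _)
          apply mul_le_mul hw' hb' (norm_nonneg _)
          exact add_nonneg (hw lam) (mul_nonneg hC (hw mu))
        calc ‖a mu‖ * (w (lam - mu) * ‖b (lam - mu)‖)
            ≤ ‖a mu‖ * ((w lam + C * w mu) * M) := h0
          _ = w lam * M * ‖a mu‖ + C * M * (w mu * ‖a mu‖) := by ring
    unfold twistedConv
    rw [← tsum_mul_left, ← Summable.tsum_sub h1 h2]
    apply tsum_congr
    intro mu
    simp only [hFdef]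
    push_cast
    ring
  -- conclude
  have hmem : Summable fun lam => ‖(S : Λ → ℂ) lam‖ ^ (2:ℝ≥0∞).toReal :=
    (lp.memℓp S).summable hp2
  have hsum2 : Summable fun lam =>
      ‖(w lam : ℂ) * twistedConv c a b lam -
        twistedConv c a (fun t => (w t : ℂ) * b t) lam‖ ^ 2 := by
    apply hmem.congr
    intro lam
    rw [hcomm lam, ← Real.rpow_natCast]
    norm_num
  refine ⟨hsum2, ?_⟩
  have heqt : (∑' lam, ‖(w lam : ℂ) * twistedConv c a b lam -
      twistedConv c a (fun t => (w t : ℂ) * b t) lam‖ ^ 2) = ‖S‖ ^ 2 := by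
    have := lp.norm_rpow_eq_tsum hp2 S
    have h2 : ((2:ℝ≥0∞).toReal) = (2:ℝ) := by norm_num
    rw [h2] at this
    rw [show ‖S‖ ^ (2:ℕ) = ‖S‖ ^ (2:ℝ) by rw [← Real.rpow_natCast]; norm_num, this]
    apply tsum_congr
    intro lam
    rw [hcomm lam, ← Real.rpow_natCast]
    norm_num
  rw [heqt, Real.sqrt_sq (lp.norm_nonneg' S)]
  have hbound : ‖S‖ ≤ ∑' mu, C * w mu * ‖a mu‖ * M :=
    le_trans (norm_tsum_le_tsum_norm hgnormsum) (Summable.tsum_le_tsum hgnorm hgnormsum hKsum)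
  calc ‖S‖ ≤ ∑' mu, C * w mu * ‖a mu‖ * M := hbound
    _ = C * (∑' mu, w mu * ‖a mu‖) * M := by
        rw [show (fun mu => C * w mu * ‖a mu‖ * M) =
            (fun mu => (C * M) * (w mu * ‖a mu‖)) by funext mu; ring,
          tsum_mul_left]
        ring
end

section
/- Let Λ be a countable discrete abelian group with unimodular 2-cocycle c and w : Λ → [0,∞) with |w(λ+μ) − w(λ)| ≤ C_dif·w(μ). For the k-fold iterated commutator ad^k of multiplication-by-w with twisted convolution by a ∈ ℓ¹(Λ), applied to b ∈ ℓ²(Λ), the formula ad^k(w)(a)(b)(λ) = Σ_μ (w(λ) − w(λ−μ))^k a(μ)b(λ−μ)c(μ,λ−μ) holds, and consequently ‖ad^k(w)(a)(b)‖_{ℓ²} ≤ C_dif^k ‖w^k·a‖_{ℓ¹}‖b‖_{ℓ²}. -/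
/-- The `c`-twisted convolution operator `b ↦ a *_c b` on functions on `Λ`. -/
noncomputable def twistedConvOp {Λ : Type*} [AddCommGroup Λ] (c : Λ → Λ → ℂ)
    (a : Λ → ℂ) (b : Λ → ℂ) (lam : Λ) : ℂ :=
  ∑' mu : Λ, a mu * b (lam - mu) * c mu (lam - mu)

/-- The commutator `ad(w)(T) = [M_w, T]` of an operator `T` on functions on `Λ` with
pointwise multiplication by the weight `w`. -/
noncomputable def adW {Λ : Type*} (w : Λ → ℝ) (T : (Λ → ℂ) → (Λ → ℂ)) :
    (Λ → ℂ) → (Λ → ℂ) :=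
  fun b lam => (w lam : ℂ) * T b lam - T (fun t => (w t : ℂ) * b t) lam

/-- Weighted Cauchy-Schwarz for tsums of nonnegative reals. -/
lemma tsum_weighted_cs {ι : Type*} {g h : ι → ℝ} (hg : ∀ i, 0 ≤ g i) (hh : ∀ i, 0 ≤ h i)
    (hgs : Summable g) (hgh2 : Summable fun i => g i * h i ^ 2) :
    (∑' i, g i * h i) ^ 2 ≤ (∑' i, g i) * ∑' i, g i * h i ^ 2 := by
  have hghs : Summable fun i => g i * h i := by
    refine Summable.of_nonneg_of_le (fun i => mul_nonneg (hg i) (hh i)) (fun i => ?_)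
      ((hgs.add hgh2).div_const 2)
    nlinarith [mul_nonneg (hg i) (sq_nonneg (h i - 1))]
  have hX : 0 ≤ ∑' i, g i := tsum_nonneg hg
  have hY : 0 ≤ ∑' i, g i * h i ^ 2 := tsum_nonneg fun i => mul_nonneg (hg i) (sq_nonneg _)
  have key : ∑' i, g i * h i ≤ Real.sqrt (∑' i, g i) * Real.sqrt (∑' i, g i * h i ^ 2) := by
    refine Summable.tsum_le_of_sum_le hghs fun s => ?_
    calc ∑ i ∈ s, g i * h i
        = ∑ i ∈ s, Real.sqrt (g i) * (Real.sqrt (g i) * h i) := by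
          refine Finset.sum_congr rfl fun i _ => ?_
          rw [← mul_assoc, Real.mul_self_sqrt (hg i)]
      _ ≤ Real.sqrt (∑ i ∈ s, Real.sqrt (g i) ^ 2) *
            Real.sqrt (∑ i ∈ s, (Real.sqrt (g i) * h i) ^ 2) :=
          Real.sum_mul_le_sqrt_mul_sqrt s _ _
      _ = Real.sqrt (∑ i ∈ s, g i) * Real.sqrt (∑ i ∈ s, g i * h i ^ 2) := by
          congr 2
          · exact Finset.sum_congr rfl fun i _ => Real.sq_sqrt (hg i)
          · exact Finset.sum_congr rfl fun i _ => by rw [mul_pow, Real.sq_sqrt (hg i)]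
      _ ≤ Real.sqrt (∑' i, g i) * Real.sqrt (∑' i, g i * h i ^ 2) := by
          have h1 := Summable.sum_le_tsum s (fun i _ => hg i) hgs
          have h2 := Summable.sum_le_tsum s (fun i _ => mul_nonneg (hg i) (sq_nonneg _)) hgh2
          exact mul_le_mul (Real.sqrt_le_sqrt h1) (Real.sqrt_le_sqrt h2)
            (Real.sqrt_nonneg _) (Real.sqrt_nonneg _)
  have h0 : 0 ≤ ∑' i, g i * h i := tsum_nonneg fun i => mul_nonneg (hg i) (hh i)
  calc (∑' i, g i * h i) ^ 2
      ≤ (Real.sqrt (∑' i, g i) * Real.sqrt (∑' i, g i * h i ^ 2)) ^ 2 :=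
        pow_le_pow_left₀ h0 key 2
    _ = (∑' i, g i) * ∑' i, g i * h i ^ 2 := by
        rw [mul_pow, Real.sq_sqrt hX, Real.sq_sqrt hY]

/-- A shear equivalence of `Λ × Λ`. -/
def shearEquiv (Λ : Type*) [AddCommGroup Λ] : Λ × Λ ≃ Λ × Λ where
  toFun p := (p.1 + p.2, p.1)
  invFun p := (p.2, p.1 - p.2)
  left_inv p := by simp
  right_inv p := by
    cases p with
    | mk x y => simp

section Aux

variable {Λ : Type*} [AddCommGroup Λ]
variable {c : Λ → Λ → ℂ} {w : Λ → ℝ} {Cdif : ℝ}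

lemma hdif_sub (hdif : ∀ lam mu, |w (lam + mu) - w lam| ≤ Cdif * w mu) :
    ∀ lam mu : Λ, |w lam - w (lam - mu)| ≤ Cdif * w mu := by
  intro lam mu
  have := hdif (lam - mu) mu
  rwa [sub_add_cancel] at this

lemma w_sub_le (hdif : ∀ lam mu, |w (lam + mu) - w lam| ≤ Cdif * w mu)
    (lam mu : Λ) : w (lam - mu) ≤ w lam + Cdif * w mu := by
  have h := abs_le.mp (hdif_sub hdif lam mu)
  linarith [h.1]

lemma key_norm_bound (hc : ∀ lam mu, ‖c lam mu‖ = 1) (hw : ∀ lam, 0 ≤ w lam)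
    (hCdif : 0 ≤ Cdif) (hdif : ∀ lam mu, |w (lam + mu) - w lam| ≤ Cdif * w mu)
    (a b : Λ → ℂ) (K : ℕ) (lam mu : Λ) :
    ‖((w lam : ℂ) - (w (lam - mu) : ℂ)) ^ K * (a mu * b (lam - mu) * c mu (lam - mu))‖ ≤
      Cdif ^ K * (w mu ^ K * ‖a mu‖ * ‖b (lam - mu)‖) := by
  have hval : ‖((w lam : ℂ) - (w (lam - mu) : ℂ)) ^ K * (a mu * b (lam - mu) * c mu (lam - mu))‖
      = |w lam - w (lam - mu)| ^ K * (‖a mu‖ * ‖b (lam - mu)‖) := by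
    rw [norm_mul, norm_pow, norm_mul, norm_mul, hc, mul_one, ← Complex.ofReal_sub,
      Complex.norm_real, Real.norm_eq_abs]
  rw [hval]
  calc |w lam - w (lam - mu)| ^ K * (‖a mu‖ * ‖b (lam - mu)‖)
      ≤ (Cdif * w mu) ^ K * (‖a mu‖ * ‖b (lam - mu)‖) :=
        mul_le_mul_of_nonneg_right
          (pow_le_pow_left₀ (abs_nonneg _) (hdif_sub hdif lam mu) K) (by positivity)
    _ = Cdif ^ K * (w mu ^ K * ‖a mu‖ * ‖b (lam - mu)‖) := by ring

lemma adW_iterate_formula (hc : ∀ lam mu, ‖c lam mu‖ = 1) (hw : ∀ lam, 0 ≤ w lam)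
    (hCdif : 0 ≤ Cdif) (hdif : ∀ lam mu, |w (lam + mu) - w lam| ≤ Cdif * w mu)
    (a : Λ → ℂ) :
    ∀ k (b : Λ → ℂ),
      (∀ j ≤ k, ∀ lam, Summable fun mu => w mu ^ j * ‖a mu‖ * ‖b (lam - mu)‖) →
      ∀ lam, (adW w)^[k] (twistedConvOp c a) b lam =
        ∑' mu : Λ, ((w lam : ℂ) - (w (lam - mu) : ℂ)) ^ k *
          (a mu * b (lam - mu) * c mu (lam - mu)) := by
  intro k
  induction k with
  | zero =>
    intro b _ lam
    simp only [Function.iterate_zero, id_eq, pow_zero, one_mul, twistedConvOp]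
  | succ k IH =>
    intro b hb lam
    set f : Λ → ℂ := fun mu => ((w lam : ℂ) - (w (lam - mu) : ℂ)) ^ k *
      (a mu * b (lam - mu) * c mu (lam - mu)) with hfdef
    have hf : Summable f := by
      refine Summable.of_norm_bounded (((hb k k.le_succ lam).mul_left (Cdif ^ k))) ?_
      exact fun mu => key_norm_bound hc hw hCdif hdif a b k lam mu
    have hf2 : Summable fun mu => (w (lam - mu) : ℂ) * f mu := by
      refine Summable.of_norm_bounded
        ((((hb k k.le_succ lam).mul_left (Cdif ^ k)).mul_left (w lam)).add
          ((hb (k + 1) le_rfl lam).mul_left (Cdif ^ (k + 1)))) ?_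
      intro mu
      have h1 := key_norm_bound hc hw hCdif hdif a b k lam mu
      have h2 := w_sub_le hdif lam mu
      have h3 : ‖(w (lam - mu) : ℂ) * f mu‖ = w (lam - mu) * ‖f mu‖ := by
        rw [norm_mul, Complex.norm_real, Real.norm_eq_abs, abs_of_nonneg (hw _)]
      rw [h3]
      calc w (lam - mu) * ‖f mu‖
          ≤ (w lam + Cdif * w mu) * (Cdif ^ k * (w mu ^ k * ‖a mu‖ * ‖b (lam - mu)‖)) := by
            refine mul_le_mul h2 h1 (norm_nonneg _) ?_
            have h5 : 0 ≤ Cdif * w mu := mul_nonneg hCdif (hw mu)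
            linarith [hw lam]
        _ = w lam * (Cdif ^ k * (w mu ^ k * ‖a mu‖ * ‖b (lam - mu)‖)) +
              Cdif ^ (k + 1) * (w mu ^ (k + 1) * ‖a mu‖ * ‖b (lam - mu)‖) := by ring
    have hbw : ∀ j ≤ k, ∀ lam0, Summable fun mu =>
        w mu ^ j * ‖a mu‖ * ‖(fun t => (w t : ℂ) * b t) (lam0 - mu)‖ := by
      intro j hj lam0
      refine Summable.of_nonneg_of_le
        (fun mu => mul_nonneg (mul_nonneg (pow_nonneg (hw mu) _) (norm_nonneg _)) (norm_nonneg _)) (fun mu => ?_)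
        (((hb j (hj.trans k.le_succ) lam0).mul_left (w lam0)).add
          ((hb (j + 1) (Nat.succ_le_succ hj) lam0).mul_left Cdif))
      simp only
      rw [norm_mul, Complex.norm_real, Real.norm_eq_abs, abs_of_nonneg (hw _)]
      have h2 := w_sub_le hdif lam0 mu
      calc w mu ^ j * ‖a mu‖ * (w (lam0 - mu) * ‖b (lam0 - mu)‖)
          ≤ w mu ^ j * ‖a mu‖ * ((w lam0 + Cdif * w mu) * ‖b (lam0 - mu)‖) := by
            have h4 : 0 ≤ w mu ^ j * ‖a mu‖ := mul_nonneg (pow_nonneg (hw mu) _) (norm_nonneg _)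
            refine mul_le_mul_of_nonneg_left ?_ h4
            exact mul_le_mul_of_nonneg_right h2 (norm_nonneg _)
        _ = w lam0 * (w mu ^ j * ‖a mu‖ * ‖b (lam0 - mu)‖) +
              Cdif * (w mu ^ (j + 1) * ‖a mu‖ * ‖b (lam0 - mu)‖) := by ring
    rw [Function.iterate_succ_apply']
    show (w lam : ℂ) * ((adW w)^[k] (twistedConvOp c a) b lam) -
        (adW w)^[k] (twistedConvOp c a) (fun t => (w t : ℂ) * b t) lam = _
    rw [IH b (fun j hj => hb j (hj.trans k.le_succ)) lam,
      IH (fun t => (w t : ℂ) * b t) hbw lam]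
    have e2 : (fun mu => ((w lam : ℂ) - (w (lam - mu) : ℂ)) ^ k *
        (a mu * ((w (lam - mu) : ℂ) * b (lam - mu)) * c mu (lam - mu))) =
        fun mu => (w (lam - mu) : ℂ) * f mu := by
      funext mu; rw [hfdef]; ring
    calc (w lam : ℂ) * (∑' mu, f mu) - ∑' mu, ((w lam : ℂ) - (w (lam - mu) : ℂ)) ^ k *
          (a mu * ((w (lam - mu) : ℂ) * b (lam - mu)) * c mu (lam - mu))
        = (∑' mu, (w lam : ℂ) * f mu) - ∑' mu, (w (lam - mu) : ℂ) * f mu := by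
          rw [tsum_mul_left, e2]
      _ = ∑' mu, ((w lam : ℂ) * f mu - (w (lam - mu) : ℂ) * f mu) :=
          (Summable.tsum_sub (hf.mul_left _) hf2).symm
      _ = ∑' mu, ((w lam : ℂ) - (w (lam - mu) : ℂ)) ^ (k + 1) *
            (a mu * b (lam - mu) * c mu (lam - mu)) := by
          refine tsum_congr fun mu => ?_
          rw [hfdef]; ring

end Aux

set_option maxHeartbeats 1000000 in
/-- For a weight `w` with `|w(λ+μ) - w(λ)| ≤ C_dif w(μ)`, the `k`-fold iterated
commutator of multiplication by `w` with twisted convolution by `a` is given by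
`ad^k(w)(a)(b)(λ) = ∑_μ (w(λ) - w(λ-μ))^k a(μ) b(λ-μ) c(μ, λ-μ)`, and satisfies
`‖ad^k(w)(a)(b)‖_{ℓ²} ≤ C_dif^k ‖w^k · a‖_{ℓ¹} ‖b‖_{ℓ²}`. -/
theorem iterated_commutator_formula_and_bound {Λ : Type*} [AddCommGroup Λ] [Countable Λ]
    (c : Λ → Λ → ℂ) (hc : ∀ lam mu, ‖c lam mu‖ = 1)
    (w : Λ → ℝ) (hw : ∀ lam, 0 ≤ w lam)
    (Cdif : ℝ) (hCdif : 0 ≤ Cdif)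
    (hdif : ∀ lam mu, |w (lam + mu) - w lam| ≤ Cdif * w mu)
    (k : ℕ) (a b : Λ → ℂ)
    (ha : ∀ i ≤ k, Summable fun mu => w mu ^ i * ‖a mu‖)
    (hb2 : Summable fun lam => ‖b lam‖ ^ 2) :
    (∀ lam, (adW w)^[k] (twistedConvOp c a) b lam =
      ∑' mu : Λ, ((w lam : ℂ) - (w (lam - mu) : ℂ)) ^ k *
        (a mu * b (lam - mu) * c mu (lam - mu))) ∧
    Real.sqrt (∑' lam, ‖(adW w)^[k] (twistedConvOp c a) b lam‖ ^ 2) ≤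
      Cdif ^ k * (∑' mu, w mu ^ k * ‖a mu‖) *
        Real.sqrt (∑' lam, ‖b lam‖ ^ 2) := by
  have hB0 : (0:ℝ) ≤ Real.sqrt (∑' lam, ‖b lam‖ ^ 2) := Real.sqrt_nonneg _
  set B := Real.sqrt (∑' lam, ‖b lam‖ ^ 2) with hBdef
  have hBb : ∀ nu, ‖b nu‖ ≤ B := by
    intro nu
    have h1 : ‖b nu‖ ^ 2 ≤ ∑' lam, ‖b lam‖ ^ 2 := Summable.le_tsum hb2 nu fun j _ => sq_nonneg _
    calc ‖b nu‖ = Real.sqrt (‖b nu‖ ^ 2) := (Real.sqrt_sq (norm_nonneg _)).symm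
      _ ≤ B := Real.sqrt_le_sqrt h1
  have hS : ∀ j ≤ k, ∀ lam, Summable fun mu => w mu ^ j * ‖a mu‖ * ‖b (lam - mu)‖ := by
    intro j hj lam
    refine Summable.of_nonneg_of_le
      (fun mu => mul_nonneg (mul_nonneg (pow_nonneg (hw mu) _) (norm_nonneg _)) (norm_nonneg _))
      (fun mu => ?_) ((ha j hj).mul_right B)
    exact mul_le_mul_of_nonneg_left (hBb _)
      (mul_nonneg (pow_nonneg (hw mu) _) (norm_nonneg _))
  have hform := adW_iterate_formula hc hw hCdif hdif a k b hS
  refine ⟨hform, ?_⟩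
  -- the weight sequence
  set g : Λ → ℝ := fun mu => Cdif ^ k * (w mu ^ k * ‖a mu‖) with hgdef
  have hg0 : ∀ mu, 0 ≤ g mu := by
    intro mu
    have h := hw mu
    exact mul_nonneg (pow_nonneg hCdif _) (mul_nonneg (pow_nonneg h _) (norm_nonneg _))
  have hgsum : Summable g := (ha k le_rfl).mul_left _
  set A := ∑' mu, g mu with hAdef
  have hA0 : 0 ≤ A := tsum_nonneg hg0
  have hA : A = Cdif ^ k * ∑' mu, w mu ^ k * ‖a mu‖ := tsum_mul_left
  have hconv_sum : ∀ lam, Summable fun mu => g mu * ‖b (lam - mu)‖ := by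
    intro lam
    refine Summable.of_nonneg_of_le (fun mu => mul_nonneg (hg0 mu) (norm_nonneg _))
      (fun mu => mul_le_mul_of_nonneg_left (hBb _) (hg0 mu)) (hgsum.mul_right B)
  have hconv2_sum : ∀ lam, Summable fun mu => g mu * ‖b (lam - mu)‖ ^ 2 := by
    intro lam
    refine Summable.of_nonneg_of_le (fun mu => mul_nonneg (hg0 mu) (sq_nonneg _))
      (fun mu => ?_) (hgsum.mul_right (B ^ 2))
    refine mul_le_mul_of_nonneg_left ?_ (hg0 mu)
    exact pow_le_pow_left₀ (norm_nonneg _) (hBb _) 2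
  have hpt : ∀ lam, ‖(adW w)^[k] (twistedConvOp c a) b lam‖ ≤
      ∑' mu, g mu * ‖b (lam - mu)‖ := by
    intro lam
    rw [hform lam]
    have hnorm : ∀ mu, ‖((w lam : ℂ) - (w (lam - mu) : ℂ)) ^ k *
        (a mu * b (lam - mu) * c mu (lam - mu))‖ ≤ g mu * ‖b (lam - mu)‖ := by
      intro mu
      refine (key_norm_bound hc hw hCdif hdif a b k lam mu).trans (le_of_eq ?_)
      rw [hgdef]; ring
    have hsumm : Summable fun mu => ‖((w lam : ℂ) - (w (lam - mu) : ℂ)) ^ k *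
        (a mu * b (lam - mu) * c mu (lam - mu))‖ :=
      Summable.of_nonneg_of_le (fun mu => norm_nonneg _) hnorm (hconv_sum lam)
    exact (norm_tsum_le_tsum_norm hsumm).trans (Summable.tsum_le_tsum hnorm hsumm (hconv_sum lam))
  have hCS : ∀ lam, (∑' mu, g mu * ‖b (lam - mu)‖) ^ 2 ≤
      A * ∑' mu, g mu * ‖b (lam - mu)‖ ^ 2 := by
    intro lam
    exact tsum_weighted_cs hg0 (fun mu => norm_nonneg _) hgsum (hconv2_sum lam)
  -- Fubini
  have hGsum : Summable (fun q : Λ × Λ => g q.1 * ‖b q.2‖ ^ 2) :=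
    hgsum.mul_of_nonneg hb2 (fun mu => hg0 mu) (fun lam => sq_nonneg _)
  have hFsum : Summable (fun p : Λ × Λ => g p.2 * ‖b (p.1 - p.2)‖ ^ 2) := by
    refine (shearEquiv Λ).summable_iff.mp ?_
    have : ((fun p : Λ × Λ => g p.2 * ‖b (p.1 - p.2)‖ ^ 2) ∘ (shearEquiv Λ)) =
        fun q : Λ × Λ => g q.1 * ‖b q.2‖ ^ 2 := by
      funext q
      simp [shearEquiv]
    rw [this]
    exact hGsum
  have hmarg := (summable_prod_of_nonneg
    (fun p => mul_nonneg (hg0 _) (sq_nonneg _))).mp hFsum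
  have htot : ∑' lam, ∑' mu, g mu * ‖b (lam - mu)‖ ^ 2 = A * ∑' lam, ‖b lam‖ ^ 2 := by
    rw [← Summable.tsum_prod' hFsum hmarg.1]
    rw [← (shearEquiv Λ).tsum_eq (fun p : Λ × Λ => g p.2 * ‖b (p.1 - p.2)‖ ^ 2)]
    have e3 : (fun q : Λ × Λ => g ((shearEquiv Λ) q).2 *
        ‖b (((shearEquiv Λ) q).1 - ((shearEquiv Λ) q).2)‖ ^ 2) =
        fun q : Λ × Λ => g q.1 * ‖b q.2‖ ^ 2 := by
      funext q
      simp [shearEquiv]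
    calc ∑' q : Λ × Λ, g ((shearEquiv Λ) q).2 *
          ‖b (((shearEquiv Λ) q).1 - ((shearEquiv Λ) q).2)‖ ^ 2
        = ∑' q : Λ × Λ, g q.1 * ‖b q.2‖ ^ 2 := by rw [e3]
      _ = ∑' mu, ∑' nu, g mu * ‖b nu‖ ^ 2 :=
          Summable.tsum_prod' hGsum (fun mu => hb2.mul_left (g mu))
      _ = ∑' mu, g mu * ∑' nu, ‖b nu‖ ^ 2 := tsum_congr fun mu => tsum_mul_left
      _ = A * ∑' lam, ‖b lam‖ ^ 2 := tsum_mul_right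
  have hsqle : ∀ lam, ‖(adW w)^[k] (twistedConvOp c a) b lam‖ ^ 2 ≤
      A * ∑' mu, g mu * ‖b (lam - mu)‖ ^ 2 := by
    intro lam
    exact (pow_le_pow_left₀ (norm_nonneg _) (hpt lam) 2).trans (hCS lam)
  have hsq : Summable fun lam => ‖(adW w)^[k] (twistedConvOp c a) b lam‖ ^ 2 :=
    Summable.of_nonneg_of_le (fun lam => sq_nonneg _) hsqle (hmarg.2.mul_left A)
  have hle : ∑' lam, ‖(adW w)^[k] (twistedConvOp c a) b lam‖ ^ 2 ≤
      A ^ 2 * ∑' lam, ‖b lam‖ ^ 2 := by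
    calc ∑' lam, ‖(adW w)^[k] (twistedConvOp c a) b lam‖ ^ 2
        ≤ ∑' lam, A * ∑' mu, g mu * ‖b (lam - mu)‖ ^ 2 :=
          Summable.tsum_le_tsum hsqle hsq (hmarg.2.mul_left A)
      _ = A * ∑' lam, ∑' mu, g mu * ‖b (lam - mu)‖ ^ 2 := tsum_mul_left
      _ = A * (A * ∑' lam, ‖b lam‖ ^ 2) := by rw [htot]
      _ = A ^ 2 * ∑' lam, ‖b lam‖ ^ 2 := by ring
  calc Real.sqrt (∑' lam, ‖(adW w)^[k] (twistedConvOp c a) b lam‖ ^ 2)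
      ≤ Real.sqrt (A ^ 2 * ∑' lam, ‖b lam‖ ^ 2) := Real.sqrt_le_sqrt hle
    _ = A * B := by
        rw [Real.sqrt_mul (sq_nonneg A), Real.sqrt_sq hA0, hBdef]
    _ = Cdif ^ k * (∑' mu, w mu ^ k * ‖a mu‖) * B := by rw [hA]
end
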